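/- Let ρ be a continuous nondecreasing nonnegative function near 0 with ρ(0)=0 that is regularly varying at 0 (with index d ≥ 1) and monotone in a right-neighborhood of 0. Define μ = (1/ρ)⁻¹ (the generalized inverse of the decreasing function 1/ρ), φ(t) = t·μ(t), and aᵢ² = φ⁻¹(i) for i ≥ 1. Then Σ_{i=1}^∞ 1/aᵢ² < ∞. -/

import Mathlib

open Filter Set Real

/-- Summability lemma for the converse theorem : let `ρ` be continuous, nondecreasing,
nonnegative near `0` with `ρ 0 = 0`, regularly varying at `0` with index `d ≥ 1` and
positive on a punctured right neighborhood of `0`.  Let `μ` be the (generalized) inverse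
of the decreasing function `1/ρ`, `φ t = t * μ t`, `φ⁻¹` the (generalized) inverse of
`φ`, and set `aᵢ² = φ⁻¹ i` for `i ≥ 1`.  Then `Σ_{i ≥ 1} 1/aᵢ² < ∞`. -/
theorem summable_inv_sq_of_regularly_varying_auxiliary
    (ρ : ℝ → ℝ) (δ : ℝ) (hδ : 0 < δ)
    (hρcont : ContinuousOn ρ (Set.Ico 0 δ)) (hρmono : MonotoneOn ρ (Set.Ico 0 δ))
    (hρnonneg : ∀ s ∈ Set.Ico (0 : ℝ) δ, 0 ≤ ρ s) (hρ0 : ρ 0 = 0)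
    (hρpos : ∀ s ∈ Set.Ioo (0 : ℝ) δ, 0 < ρ s)
    (d : ℝ) (hd : 1 ≤ d)
    (hreg : ∀ l > (0 : ℝ),
      Tendsto (fun t => ρ (l * t) / ρ t) (nhdsWithin 0 (Set.Ioi 0)) (nhds (l ^ d)))
    (μ : ℝ → ℝ) (hμ : ∀ᶠ t in atTop, 0 < μ t ∧ 1 / ρ (μ t) = t)
    (hμ0 : Tendsto μ atTop (nhdsWithin 0 (Set.Ioi 0)))
    (φInv : ℝ → ℝ) (hφInvpos : ∀ i : ℕ, 0 < φInv (i + 1))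
    (hφInv : ∀ᶠ y in atTop, 0 < φInv y ∧ φInv y * μ (φInv y) = y)
    (hφInvTop : Tendsto φInv atTop atTop) :
    Summable (fun i : ℕ => 1 / φInv (i + 1)) := by
  classical
  -- the constant `C` and the threshold `η`
  set C : ℝ := 2 ^ d + 1 with hCdef
  have h2d_pos : (0:ℝ) < 2 ^ d := Real.rpow_pos_of_pos (by norm_num) d
  have hCpos : 0 < C := by rw [hCdef]; linarith
  have hevC : ∀ᶠ t in nhdsWithin (0:ℝ) (Set.Ioi 0), ρ (2 * t) / ρ t < C :=
    ((hreg 2 (by norm_num)).eventually_lt_const (by rw [hCdef]; linarith))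
  obtain ⟨u, hu, husub⟩ := mem_nhdsGT_iff_exists_Ioc_subset.mp hevC
  set η : ℝ := min u (δ / 2) with hηdef
  have hη0 : 0 < η := lt_min hu (by linarith)
  have hηδ : η < δ := lt_of_le_of_lt (min_le_right _ _) (by linarith)
  have hB : ∀ t ∈ Set.Ioc (0:ℝ) η, ρ (2 * t) < C * ρ t := by
    intro t ht
    have h1 : ρ (2 * t) / ρ t < C := husub ⟨ht.1, ht.2.trans (min_le_left _ _)⟩
    have hρt : 0 < ρ t := hρpos t ⟨ht.1, lt_of_le_of_lt ht.2 hηδ⟩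
    exact (div_lt_iff₀ hρt).mp h1
  -- dyadic points
  have hPmem : ∀ k : ℕ, η / 2 ^ k ∈ Set.Ioc (0:ℝ) η := by
    intro k
    have h2k : (1:ℝ) ≤ 2 ^ k := one_le_pow₀ (by norm_num)
    exact ⟨by positivity, div_le_self hη0.le h2k⟩
  have hPIoo : ∀ k : ℕ, η / 2 ^ k ∈ Set.Ioo (0:ℝ) δ :=
    fun k => ⟨(hPmem k).1, lt_of_le_of_lt (hPmem k).2 hηδ⟩
  have hPρpos : ∀ k : ℕ, 0 < ρ (η / 2 ^ k) := fun k => hρpos _ (hPIoo k)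
  have hc : ∀ k : ℕ, ρ (η / 2 ^ k) < C * ρ (η / 2 ^ (k + 1)) := by
    intro k
    have := hB (η / 2 ^ (k + 1)) (hPmem (k + 1))
    have heq : 2 * (η / 2 ^ (k + 1)) = η / 2 ^ k := by
      rw [pow_succ]; field_simp
    rwa [heq] at this
  -- eventual facts along ℕ
  have hμ' : ∀ᶠ y in atTop, 0 < μ (φInv y) ∧ 1 / ρ (μ (φInv y)) = φInv y :=
    hφInvTop.eventually hμ
  have hIoc : Set.Ioc (0:ℝ) η ∈ nhdsWithin (0:ℝ) (Set.Ioi 0) :=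
    Ioc_mem_nhdsGT_of_mem ⟨le_refl 0, hη0⟩
  have hμ0' : ∀ᶠ y in atTop, μ (φInv y) ∈ Set.Ioc (0:ℝ) η :=
    hφInvTop.eventually (hμ0.eventually_mem hIoc)
  obtain ⟨N0, hN0⟩ := Filter.eventually_atTop.mp
    ((tendsto_natCast_atTop_atTop (R := ℝ)).eventually (hμ'.and (hμ0'.and hφInv)))
  set N : ℕ := max N0 1 with hNdef
  -- notation
  set s : ℕ → ℝ := fun n => μ (φInv (n : ℝ)) with hsdef
  set K : ℕ → ℕ := fun n => ⌊Real.logb 2 (η / s n)⌋₊ with hKdef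
  -- the key per-index facts
  have key : ∀ n : ℕ, N ≤ n →
      ρ (s n) = 1 / φInv (n : ℝ) ∧
      ρ (s n) ≤ ρ (η / 2 ^ K n) ∧
      (n : ℝ) ≤ (η / 2 ^ K n) / ρ (η / 2 ^ (K n + 1)) := by
    intro n hn
    have hnN0 : N0 ≤ n := le_trans (le_max_left _ _) hn
    obtain ⟨⟨hspos, hinv⟩, hsIoc, hφpos, hφeq⟩ := hN0 n hnN0
    have hsδ : s n ∈ Set.Ioo (0:ℝ) δ := ⟨hsIoc.1, lt_of_le_of_lt hsIoc.2 hηδ⟩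
    have hρs : 0 < ρ (s n) := hρpos _ hsδ
    have hρeq : ρ (s n) = 1 / φInv (n : ℝ) := by
      have h' : 1 / ρ (s n) = φInv (n : ℝ) := hinv
      rw [← h', one_div_one_div]
    -- n = s n / ρ (s n)
    have hneq : (n : ℝ) = s n / ρ (s n) := by
      rw [hρeq, div_div_eq_mul_div, div_one]
      simp only [hsdef]
      rw [mul_comm]; exact hφeq.symm
    -- dyadic localisation
    have hx1 : 1 ≤ η / s n := (le_div_iff₀ hspos).mpr (by linarith [hsIoc.2])
    have hxpos : 0 < η / s n := by positivity
    have hlog0 : 0 ≤ Real.logb 2 (η / s n) := Real.logb_nonneg one_lt_two hx1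
    have hfl : (K n : ℝ) ≤ Real.logb 2 (η / s n) := Nat.floor_le hlog0
    have hfl' : Real.logb 2 (η / s n) < (K n : ℝ) + 1 := Nat.lt_floor_add_one _
    have h2K : (2:ℝ) ^ (K n) ≤ η / s n := by
      have := (Real.rpow_le_rpow_left_iff (x := 2) one_lt_two).mpr hfl
      rwa [Real.rpow_logb (by norm_num) (by norm_num) hxpos, Real.rpow_natCast] at this
    have h2K' : η / s n < (2:ℝ) ^ (K n + 1) := by
      have := (Real.rpow_lt_rpow_left_iff (x := 2) one_lt_two).mpr hfl'
      rw [Real.rpow_logb (by norm_num) (by norm_num) hxpos] at this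
      calc η / s n < (2:ℝ) ^ ((K n : ℝ) + 1) := this
        _ = (2:ℝ) ^ (K n + 1) := by
            rw [← Real.rpow_natCast 2 (K n + 1)]; push_cast; ring_nf
    have hsle : s n ≤ η / 2 ^ K n := by
      rw [le_div_iff₀ (by positivity : (0:ℝ) < 2 ^ K n)]
      have := (le_div_iff₀ hspos).mp h2K
      linarith [this]
    have hslt : η / 2 ^ (K n + 1) < s n := by
      rw [div_lt_iff₀ (by positivity : (0:ℝ) < 2 ^ (K n + 1))]
      have := (div_lt_iff₀ hspos).mp h2K'
      linarith [this]
    refine ⟨hρeq, ?_, ?_⟩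
    · exact hρmono ⟨hsδ.1.le, hsδ.2⟩ ⟨(hPIoo (K n)).1.le, (hPIoo (K n)).2⟩ hsle
    · rw [hneq]
      have hmono : ρ (η / 2 ^ (K n + 1)) ≤ ρ (s n) :=
        hρmono ⟨(hPIoo (K n + 1)).1.le, (hPIoo (K n + 1)).2⟩ ⟨hsδ.1.le, hsδ.2⟩ hslt.le
      exact div_le_div₀ ((hPmem (K n)).1.trans_le (le_refl _)).le hsle (hPρpos (K n + 1)) hmono
  -- positivity of the terms
  have hfpos : ∀ i : ℕ, 0 < 1 / φInv ((i:ℝ) + 1) := fun i => by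
    have := hφInvpos i
    positivity
  -- the head sum
  set H : ℝ := ∑ i ∈ Finset.range N, 1 / φInv ((i:ℝ) + 1) with hHdef
  apply summable_of_sum_range_le (c := H + 2 * (C * η)) (fun i => (hfpos i).le)
  intro n
  -- split the sum
  rw [← Finset.sum_filter_add_sum_filter_not (Finset.range n) (fun i => i < N)]
  have hhead : ∑ i ∈ (Finset.range n).filter (fun i => i < N), 1 / φInv ((i:ℝ) + 1) ≤ H := by
    apply Finset.sum_le_sum_of_subset_of_nonneg
    · intro i hi
      simp only [Finset.mem_filter, Finset.mem_range] at hi ⊢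
      exact hi.2
    · intro i _ _
      exact (hfpos i).le
  set T : Finset ℕ := (Finset.range n).filter (fun i => ¬ i < N) with hTdef
  have htail : ∑ i ∈ T, 1 / φInv ((i:ℝ) + 1) ≤ 2 * (C * η) := by
    have hTN : ∀ i ∈ T, N ≤ i + 1 := by
      intro i hi
      rw [hTdef, Finset.mem_filter] at hi
      omega
    -- fiberwise sum over K (i+1)
    rw [← Finset.sum_fiberwise_of_maps_to (t := T.image (fun i => K (i + 1)))
        (g := fun i => K (i + 1)) (fun i hi => Finset.mem_image_of_mem _ hi)]
    have hfiber : ∀ k ∈ T.image (fun i => K (i + 1)),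
        ∑ i ∈ T.filter (fun i => K (i + 1) = k), 1 / φInv ((i:ℝ) + 1)
          ≤ C * η * (1 / 2) ^ k := by
      intro k _
      set F := T.filter (fun i => K (i + 1) = k) with hFdef
      set m : ℕ := ⌊(η / 2 ^ k) / ρ (η / 2 ^ (k + 1))⌋₊ with hmdef
      have hFsub : F ⊆ Finset.range m := by
        intro i hi
        rw [hFdef, Finset.mem_filter] at hi
        obtain ⟨hiT, hiK⟩ := hi
        obtain ⟨_, _, hb⟩ := key (i + 1) (hTN i hiT)
        rw [hiK] at hb
        have : i + 1 ≤ m := Nat.le_floor (by push_cast; push_cast at hb; linarith)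
        simp only [Finset.mem_range]; omega
      have hbound : ∀ i ∈ F, 1 / φInv ((i:ℝ) + 1) ≤ ρ (η / 2 ^ k) := by
        intro i hi
        rw [hFdef, Finset.mem_filter] at hi
        obtain ⟨hiT, hiK⟩ := hi
        obtain ⟨ha, hb, _⟩ := key (i + 1) (hTN i hiT)
        rw [hiK] at hb
        have : ((i:ℝ) + 1) = ((i + 1 : ℕ) : ℝ) := by push_cast; ring
        rw [this, ← ha]
        exact hb
      calc ∑ i ∈ F, 1 / φInv ((i:ℝ) + 1) ≤ F.card • ρ (η / 2 ^ k) :=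
            Finset.sum_le_card_nsmul F _ _ hbound
        _ = (F.card : ℝ) * ρ (η / 2 ^ k) := nsmul_eq_mul _ _
        _ ≤ (m : ℝ) * ρ (η / 2 ^ k) := by
            apply mul_le_mul_of_nonneg_right _ (hPρpos k).le
            exact_mod_cast Finset.card_le_card hFsub |>.trans (Finset.card_range m).le
        _ ≤ ((η / 2 ^ k) / ρ (η / 2 ^ (k + 1))) * ρ (η / 2 ^ k) := by
            apply mul_le_mul_of_nonneg_right _ (hPρpos k).le
            exact Nat.floor_le (div_pos (hPmem k).1 (hPρpos (k + 1))).le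
        _ ≤ ((η / 2 ^ k) / ρ (η / 2 ^ (k + 1))) * (C * ρ (η / 2 ^ (k + 1))) := by
            apply mul_le_mul_of_nonneg_left (hc k).le
            exact (div_pos (hPmem k).1 (hPρpos (k + 1))).le
        _ = C * η * (1 / 2) ^ k := by
            have hne : ρ (η / 2 ^ (k + 1)) ≠ 0 := (hPρpos (k + 1)).ne'
            field_simp
            ring
            rw [← mul_pow]; norm_num
    calc ∑ k ∈ T.image (fun i => K (i + 1)),
          ∑ i ∈ T.filter (fun i => K (i + 1) = k), 1 / φInv ((i:ℝ) + 1)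
        ≤ ∑ k ∈ T.image (fun i => K (i + 1)), C * η * (1 / 2) ^ k :=
          Finset.sum_le_sum hfiber
      _ ≤ ∑' k : ℕ, C * η * (1 / 2) ^ k := by
          apply Summable.sum_le_tsum _ (fun k _ => ?_)
            ((summable_geometric_of_lt_one (by norm_num) (by norm_num)).mul_left (C * η))
          exact mul_nonneg (mul_nonneg hCpos.le hη0.le) (by positivity)
      _ = C * η * ∑' k : ℕ, ((1:ℝ) / 2) ^ k := tsum_mul_left
      _ = 2 * (C * η) := by
          rw [tsum_geometric_of_lt_one (by norm_num) (by norm_num)]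
          norm_num
          ring
  linarith [hhead, htail]
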